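/- For every nonzero integer n, sin²(√2 π n) ≥ 1/(2n²). -/

import Mathlib

open Real

set_option maxHeartbeats 1000000 in
private lemma key_pos (n : ℤ) (hn : 1 ≤ n) :
    Real.sin (Real.sqrt 2 * π * n) ^ 2 ≥ 1 / (2 * (n : ℝ) ^ 2) := by
  set s : ℝ := Real.sqrt 2 with hs_def
  have hs2 : s ^ 2 = 2 := Real.sq_sqrt (by norm_num)
  have hs0 : 0 ≤ s := Real.sqrt_nonneg 2
  have hs1 : 1 < s := by nlinarith
  have hs32 : s < 3 / 2 := by nlinarith
  have hnR : (1 : ℝ) ≤ (n : ℝ) := by exact_mod_cast hn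
  set x : ℝ := s * (n : ℝ) with hx_def
  have hx1 : 1 < x := by nlinarith
  set m : ℤ := round x with hm_def
  have habs : |x - (m : ℝ)| ≤ 1 / 2 := abs_sub_round x
  obtain ⟨habs1, habs2⟩ := abs_le.mp habs
  have hm1 : 1 ≤ m := by
    have h0 : (0 : ℝ) < (m : ℝ) := by linarith
    have h0' : (0 : ℤ) < m := by exact_mod_cast h0
    omega
  -- Diophantine: 2 n^2 ≠ m^2
  have hirr : Irrational (Real.sqrt 2) := irrational_sqrt_two
  have hne : 2 * n ^ 2 - m ^ 2 ≠ 0 := by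
    intro h
    have hmr : (m : ℝ) ^ 2 = x ^ 2 := by
      have : (2 : ℝ) * (n : ℝ) ^ 2 = (m : ℝ) ^ 2 := by exact_mod_cast sub_eq_zero.mp h
      rw [hx_def]; nlinarith
    have hm0 : (0 : ℝ) < (m : ℝ) := by exact_mod_cast hm1
    have hxm : x = (m : ℝ) := by nlinarith
    have hn0 : (n : ℝ) ≠ 0 := by positivity
    apply hirr
    refine ⟨(m : ℚ) / (n : ℚ), ?_⟩
    push_cast
    rw [← hs_def]
    field_simp
    nlinarith [hxm, hx_def]
  have hZ : (1 : ℝ) ≤ |2 * (n : ℝ) ^ 2 - (m : ℝ) ^ 2| := by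
    have := Int.one_le_abs hne
    calc (1 : ℝ) ≤ ((|2 * n ^ 2 - m ^ 2| : ℤ) : ℝ) := by exact_mod_cast this
      _ = |2 * (n : ℝ) ^ 2 - (m : ℝ) ^ 2| := by push_cast [Int.cast_abs]; ring_nf
  set a : ℝ := x - (m : ℝ) with ha_def
  have hfact : 2 * (n : ℝ) ^ 2 - (m : ℝ) ^ 2 = a * (x + (m : ℝ)) := by
    rw [ha_def, hx_def]; nlinarith
  have hxm_pos : 0 < x + (m : ℝ) := by
    have : (1 : ℝ) ≤ (m : ℝ) := by exact_mod_cast hm1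
    linarith
  have hZ' : 1 ≤ |a| * (x + (m : ℝ)) := by
    rw [hfact] at hZ
    rwa [abs_mul, abs_of_pos hxm_pos] at hZ
  have hmx : (m : ℝ) ≤ x + 1 / 2 := by linarith
  have hkey : 1 ≤ |a| * (2 * x + 1 / 2) := by
    have h0 : 0 ≤ |a| := abs_nonneg a
    nlinarith
  -- reduce sin to sin (π * |a|)
  have hsin : Real.sin (s * π * (n : ℝ)) ^ 2 = Real.sin (π * |a|) ^ 2 := by
    have h1 : s * π * (n : ℝ) = π * a + (m : ℤ) * π := by rw [ha_def, hx_def]; push_cast; ring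
    rw [h1, Real.sin_add_int_mul_pi]
    have hu : (((-1 : ℝ) ^ m) : ℝ) ^ 2 = 1 := by
      rcases Int.even_or_odd m with he | ho
      · rw [he.neg_one_zpow]; norm_num
      · rw [Odd.neg_one_zpow ho]; norm_num
    rw [mul_pow, hu, one_mul]
    rcases abs_choice a with h | h
    · rw [h]
    · rw [h, mul_neg, Real.sin_neg, neg_sq]
  set b : ℝ := |a| with hb_def
  have hb0 : 0 ≤ b := abs_nonneg a
  have hb12 : b ≤ 1 / 2 := habs
  clear_value b a m x s
  have hbpos : 0 < b := by
    rcases hb0.lt_or_eq with h | h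
    · exact h
    · exfalso; rw [← h] at hkey; norm_num at hkey
  -- suffices sin (π b) ≥ 1 / x
  have hπ := Real.pi_gt_three
  have hsin_nonneg : 0 ≤ Real.sin (π * b) := by
    apply Real.sin_nonneg_of_nonneg_of_le_pi
    · positivity
    · nlinarith
  have hgoal : Real.sin (π * b) ≥ 1 / x := by
    rcases le_or_gt (1 / (2 * x)) b with hcase | hcase
    · -- Jordan's inequality
      have hJ : 2 / π * (π * b) ≤ Real.sin (π * b) := by
        apply Real.mul_le_sin (by positivity)
        nlinarith
      have heq : 2 / π * (π * b) = 2 * b := by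
        field_simp
      rw [heq] at hJ
      have hfin : 1 / x ≤ 2 * b := by
        rw [div_le_iff₀ (by linarith : (0:ℝ) < x)]
        rw [div_le_iff₀ (by linarith : (0:ℝ) < 2 * x)] at hcase
        nlinarith
      linarith
    · -- b < 1/(2x): use cubic lower bound; need n ≥ 2 or n = 1 contradiction
      rcases eq_or_lt_of_le hn with h1 | h2
      · -- n = 1: contradiction with b < 1/(2x)
        exfalso
        have hn1 : (n : ℝ) = 1 := by exact_mod_cast h1.symm
        have hxs : x = s := by rw [hx_def, hn1, mul_one]
        have hm2 : (m : ℝ) < 2 := by linarith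
        have hm2' : m < 2 := by exact_mod_cast hm2
        have hm_eq : m = 1 := by omega
        have ha_eq : a = s - 1 := by rw [ha_def, hxs, hm_eq]; norm_num
        have hb_eq : b = s - 1 := by rw [hb_def, ha_eq, abs_of_pos (by linarith)]
        rw [lt_div_iff₀ (by linarith : (0:ℝ) < 2 * x)] at hcase
        have hval : b * (2 * x) = 4 - 2 * s := by
          rw [hb_eq, hxs]; linear_combination 2 * hs2
        linarith
      · -- n ≥ 2
        have hn2 : (2 : ℝ) ≤ (n : ℝ) := by exact_mod_cast h2
        have hx2 : 2 * s ≤ x := by rw [hx_def]; nlinarith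
        have hπ4 : π < 3.15 := Real.pi_lt_d2
        have hπ3 : (3.141592 : ℝ) < π := Real.pi_gt_d6
        have h4s : (0:ℝ) < 4 * s := by linarith
        have hb4s : b * (4 * s) < 1 := by
          have h1 : 1 / (2 * x) ≤ 1 / (4 * s) := by
            apply one_div_le_one_div_of_le h4s (by linarith)
          calc b * (4 * s) < 1 / (2 * x) * (4 * s) := by
                apply mul_lt_mul_of_pos_right hcase h4s
            _ ≤ 1 / (4 * s) * (4 * s) := by
                apply mul_le_mul_of_nonneg_right h1 (by linarith)
            _ = 1 := by field_simp
        have hpb1 : π * b < 1 := by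
          nlinarith [mul_pos hbpos (show (0:ℝ) < 4 * s - π by nlinarith)]
        have hb2 : b ^ 2 < 1 / 32 := by
          have hpos : 0 < b * (4 * s) := mul_pos hbpos h4s
          have h2 : (b * (4 * s)) ^ 2 < 1 := by
            have := pow_lt_one₀ hpos.le hb4s (two_ne_zero)
            simpa using this
          have h3 : (b * (4 * s)) ^ 2 = 32 * b ^ 2 := by
            linear_combination (16 * b ^ 2) * hs2
          linarith
        have hcube : π * b - (π * b) ^ 3 / 4 < Real.sin (π * b) := by
          have hpb0 : 0 < π * b := mul_pos Real.pi_pos hbpos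
          have := Real.sin_gt_sub_cube hpb0
          nlinarith [pow_pos hpb0 3]
        have hx0 : (0:ℝ) < x := by linarith
        rw [ge_iff_le, div_le_iff₀ hx0]
        -- from hkey : 1 ≤ b * (2x + 1/2), so π ≤ π b (2x + 1/2)
        have hπb : π ≤ π * b * (2 * x + 1 / 2) := by
          nlinarith [Real.pi_pos]
        have hπ2 : π ^ 2 < 3.15 ^ 2 := by
          exact pow_lt_pow_left₀ hπ4 Real.pi_pos.le two_ne_zero
        have hT2 : (π * b) ^ 2 ≤ 3.15 ^ 2 / 32 := by
          have h1 : (π * b) ^ 2 = π ^ 2 * b ^ 2 := by ring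
          rw [h1]
          calc π ^ 2 * b ^ 2 ≤ 3.15 ^ 2 * b ^ 2 := by nlinarith [sq_nonneg b]
            _ ≤ 3.15 ^ 2 * (1 / 32) := by nlinarith
            _ = 3.15 ^ 2 / 32 := by ring
        have hcb : (π * b) ^ 3 ≤ (π * b) * (3.15 ^ 2 / 32) := by
          calc (π * b) ^ 3 = (π * b) * (π * b) ^ 2 := by ring
            _ ≤ (π * b) * (3.15 ^ 2 / 32) := by
                apply mul_le_mul_of_nonneg_left hT2 (by positivity)
        have hB : (π * b) ^ 3 * x ≤ (π * b) * (3.15 ^ 2 / 32) * x :=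
          mul_le_mul_of_nonneg_right hcb hx0.le
        have hC : (π * b - (π * b) ^ 3 / 4) * x < Real.sin (π * b) * x :=
          mul_lt_mul_of_pos_right hcube hx0
        linarith only [hB, hC, hπb, hpb1, hπ3]
  have hx2eq : x ^ 2 = 2 * (n : ℝ) ^ 2 := by rw [hx_def, mul_pow, hs2]
  calc Real.sin (s * π * (n:ℝ)) ^ 2 = Real.sin (π * b) ^ 2 := hsin
    _ ≥ (1 / x) ^ 2 := by
        apply pow_le_pow_left₀ (by positivity) hgoal
    _ = 1 / (2 * (n : ℝ) ^ 2) := by rw [div_pow, one_pow, hx2eq]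

theorem stmt_13 (n : ℤ) (hn : n ≠ 0) :
    Real.sin (Real.sqrt 2 * π * n) ^ 2 ≥ 1 / (2 * (n : ℝ) ^ 2) := by
  rcases lt_or_gt_of_ne hn with h | h
  · have h1 : 1 ≤ -n := by omega
    have := key_pos (-n) h1
    have hcast : ((-n : ℤ) : ℝ) = -(n : ℝ) := by push_cast; ring
    rw [hcast] at this
    rw [show Real.sqrt 2 * π * -(n:ℝ) = -(Real.sqrt 2 * π * (n:ℝ)) by ring,
      Real.sin_neg, neg_pow] at this
    simpa using this
  · exact key_pos n h
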